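/- There exists ε₀ > 0 such that for all real numbers s ≠ 0, p, t with |p| < ε₀ and |t| ≤ ε₀/|s| the following hold, where s_t = s·e^{p}·(e^{−p} − s·e^{p}·t) and p_t = −log(e^{−p} − s·e^{p}·t): (i) e^{−p} − s·e^{p}·t > 0, so p_t is well defined; (ii) |s_t| ≤ 2|s| and |p_t| ≤ 2(|p| + |t|·|s|); (iii) moreover, for every ε ∈ (0, ε₀], if |p| < ε and |t| ≤ ε/|s|, then |φ′(t) − 1| < √ε, where φ(u) = u·e^{p}/(e^{−p} − u·s·e^{p}) and φ′ denotes its derivative. -/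

import Mathlib

section MatchingAux

private lemma matching_aux (s p t ε : ℝ) (hs : 0 < |s|) (hε : 0 < ε) (hε0 : ε ≤ 1/100)
    (hp : |p| ≤ ε) (ht : |t| ≤ ε / |s|) :
    97/100 ≤ Real.exp (-p) - s * Real.exp p * t ∧
    Real.exp (-p) - s * Real.exp p * t ≤ 102/99 ∧
    |1 - (Real.exp (-p) - s * Real.exp p * t)| ≤ 4 * ε ∧
    |s * Real.exp p * t| ≤ (100/99) * (|t| * |s|) ∧
    |t| * |s| ≤ ε ∧
    1 - p ≤ Real.exp (-p) ∧
    |Real.exp (-p) - 1| ≤ 2 * |p| := by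
  obtain ⟨hpl, hpr⟩ := abs_le.mp hp
  have h1 : 1 - p ≤ Real.exp (-p) := by
    have := Real.add_one_le_exp (-p); linarith
  have h2 : 1 + p ≤ Real.exp p := by
    have := Real.add_one_le_exp p; linarith
  have hmul : Real.exp p * Real.exp (-p) = 1 := by
    rw [← Real.exp_add]; simp
  have hnp_ge : (99:ℝ)/100 ≤ Real.exp (-p) := by linarith
  have hpp_ge : (99:ℝ)/100 ≤ Real.exp p := by linarith
  have hp_le : Real.exp p ≤ 100/99 := by nlinarith [Real.exp_pos p]
  have hnp_le : Real.exp (-p) ≤ 100/99 := by nlinarith [Real.exp_pos (-p)]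
  have hts : |t| * |s| ≤ ε := (le_div_iff₀ hs).mp ht
  have hAeq : |s * Real.exp p * t| = |s| * Real.exp p * |t| := by
    rw [abs_mul, abs_mul, abs_of_pos (Real.exp_pos p)]
  have hA : |s * Real.exp p * t| ≤ (100/99) * (|t| * |s|) := by
    rw [hAeq]
    calc |s| * Real.exp p * |t| ≤ |s| * (100/99) * |t| :=
          mul_le_mul_of_nonneg_right (mul_le_mul_of_nonneg_left hp_le (abs_nonneg s))
            (abs_nonneg t)
      _ = (100/99) * (|t| * |s|) := by ring
  have hAle : |s * Real.exp p * t| ≤ (100/99) * ε := by nlinarith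
  have hAl := neg_abs_le (s * Real.exp p * t)
  have hAr := le_abs_self (s * Real.exp p * t)
  have hexp_sub : |Real.exp (-p) - 1| ≤ 2 * |p| := by
    have := Real.abs_exp_sub_one_le (x := -p) (by rw [abs_neg]; linarith [abs_nonneg p])
    simpa [abs_neg] using this
  refine ⟨by linarith, by linarith, ?_, hA, hts, h1, hexp_sub⟩
  have := abs_le.mp hexp_sub
  rw [abs_le]
  constructor <;> linarith

end MatchingAux

set_option maxHeartbeats 1000000 in
/-- Quantitative estimates of the matching function lemma (Lemma 3.9). With
`s_t = s·eᵖ·(e⁻ᵖ − s·eᵖ·t)`, `p_t = −log(e⁻ᵖ − s·eᵖ·t)` and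
`φ(u) = u·eᵖ/(e⁻ᵖ − u·s·eᵖ)`. -/
theorem matching_function_estimates :
    ∃ ε₀ : ℝ, 0 < ε₀ ∧
      ∀ s p t : ℝ, s ≠ 0 → |p| < ε₀ → |t| ≤ ε₀ / |s| →
        (0 < Real.exp (-p) - s * Real.exp p * t) ∧
        (|s * Real.exp p * (Real.exp (-p) - s * Real.exp p * t)| ≤ 2 * |s|) ∧
        (|(- Real.log (Real.exp (-p) - s * Real.exp p * t))| ≤ 2 * (|p| + |t| * |s|)) ∧
        (∀ ε : ℝ, 0 < ε → ε ≤ ε₀ → |p| < ε → |t| ≤ ε / |s| →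
          |deriv (fun u : ℝ => u * Real.exp p / (Real.exp (-p) - u * s * Real.exp p)) t - 1|
            < Real.sqrt ε) := by
  refine ⟨1/100, by norm_num, ?_⟩
  intro s p t hs hp ht
  have hs0 : 0 < |s| := abs_pos.mpr hs
  obtain ⟨hx1, hx2, hx3, hA, hts, hexpnp, hexp_sub⟩ :=
    matching_aux s p t (1/100) hs0 (by norm_num) le_rfl hp.le ht
  set x : ℝ := Real.exp (-p) - s * Real.exp p * t with hxdef
  have hx0 : 0 < x := by linarith
  have hmul : Real.exp p * Real.exp (-p) = 1 := by rw [← Real.exp_add]; simp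
  refine ⟨hx0, ?_, ?_, ?_⟩
  · -- |s e^p x| ≤ 2|s|
    obtain ⟨hpl, hpr⟩ := abs_le.mp hp.le
    have hnp_ge : (99:ℝ)/100 ≤ Real.exp (-p) := by
      have := Real.add_one_le_exp (-p); linarith
    have hp_le : Real.exp p ≤ 100/99 := by nlinarith [Real.exp_pos p]
    have hrw : |s * Real.exp p * x| = |s| * (Real.exp p * x) := by
      rw [abs_mul, abs_mul, abs_of_pos (Real.exp_pos p), abs_of_pos hx0, mul_assoc]
    rw [hrw]
    have h5 : Real.exp p * x ≤ (100/99) * (102/99) :=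
      mul_le_mul hp_le hx2 hx0.le (by norm_num)
    have h6 : |s| * (Real.exp p * x) ≤ |s| * 2 :=
      mul_le_mul_of_nonneg_left (h5.trans (by norm_num)) (abs_nonneg s)
    linarith
  · -- log bound
    have hlog1 : Real.log x ≤ x - 1 := Real.log_le_sub_one_of_pos hx0
    have hlog2 : -Real.log x ≤ (1 - x) / x := by
      have h := Real.log_le_sub_one_of_pos (inv_pos.mpr hx0)
      rw [Real.log_inv] at h
      have : x⁻¹ - 1 = (1 - x) / x := by field_simp
      linarith [this ▸ h]
    have hB : (1 - x) / x ≤ (|p| + (100/99) * (|t| * |s|)) / (97/100) := by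
      apply div_le_div₀ (by positivity) ?_ (by norm_num) hx1
      have hAl := neg_abs_le (s * Real.exp p * t)
      have hAr := le_abs_self (s * Real.exp p * t)
      have h1 : 1 - Real.exp (-p) ≤ p := by linarith [hexpnp]
      have h2 : p ≤ |p| := le_abs_self p
      simp only [hxdef]
      linarith
    have hxub : x - 1 ≤ 2 * |p| + (100/99) * (|t| * |s|) := by
      have := abs_le.mp hexp_sub
      have hAl := neg_abs_le (s * Real.exp p * t)
      simp only [hxdef]
      linarith
    rw [abs_neg, abs_le]
    constructor
    · have : (|p| + (100/99) * (|t| * |s|)) / (97/100) ≤ 2 * (|p| + |t| * |s|) := by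
        rw [div_le_iff₀ (by norm_num)]
        nlinarith [abs_nonneg p, mul_nonneg (abs_nonneg t) (abs_nonneg s)]
      linarith
    · nlinarith [mul_nonneg (abs_nonneg t) (abs_nonneg s)]
  · -- derivative bound
    intro ε hε hε0 hpε htε
    obtain ⟨hy1, hy2, hy3, hA', hts', _, _⟩ :=
      matching_aux s p t ε hs0 hε hε0 hpε.le htε
    rw [← hxdef] at hy1 hy2 hy3
    have hxe : Real.exp (-p) - t * s * Real.exp p = x := by rw [hxdef]; ring
    have hne : Real.exp (-p) - t * s * Real.exp p ≠ 0 := by rw [hxe]; exact hx0.ne'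
    have h1 : HasDerivAt (fun u : ℝ => u * Real.exp p) (Real.exp p) t := by
      simpa using (hasDerivAt_id t).mul_const (Real.exp p)
    have h2 : HasDerivAt (fun u : ℝ => Real.exp (-p) - u * s * Real.exp p)
        (-(s * Real.exp p)) t := by
      have h3 : HasDerivAt (fun u : ℝ => u * (s * Real.exp p)) (s * Real.exp p) t := by
        simpa using (hasDerivAt_id t).mul_const (s * Real.exp p)
      have h4 : HasDerivAt (fun u : ℝ => u * s * Real.exp p) (s * Real.exp p) t := by
        simpa [mul_assoc] using h3
      have h5 : HasDerivAt (fun u : ℝ => Real.exp (-p) - u * s * Real.exp p) (0 - s * Real.exp p) t :=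
        (hasDerivAt_const t (Real.exp (-p))).sub h4
      rw [zero_sub] at h5
      exact h5
    have hD : HasDerivAt (fun u : ℝ => u * Real.exp p / (Real.exp (-p) - u * s * Real.exp p))
        ((Real.exp p * (Real.exp (-p) - t * s * Real.exp p) - t * Real.exp p * (-(s * Real.exp p))) /
          (Real.exp (-p) - t * s * Real.exp p) ^ 2) t := h1.div h2 hne
    have hnum : Real.exp p * (Real.exp (-p) - t * s * Real.exp p)
        - t * Real.exp p * (-(s * Real.exp p)) = 1 := by linear_combination hmul
    rw [hD.deriv, hnum, hxe]
    have hx2pos : 0 < x ^ 2 := by positivity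
    have heq : 1 / x ^ 2 - 1 = (1 - x ^ 2) / x ^ 2 := by field_simp
    rw [heq, abs_div, abs_of_pos hx2pos, div_lt_iff₀ hx2pos]
    have hsq : Real.sqrt ε * Real.sqrt ε = ε := Real.mul_self_sqrt hε.le
    have hsqpos : 0 < Real.sqrt ε := Real.sqrt_pos.mpr hε
    have hsqle : Real.sqrt ε ≤ 1/10 := by
      have := Real.sqrt_le_sqrt hε0
      rwa [show (1:ℝ)/100 = (1/10)^2 by norm_num, Real.sqrt_sq (by norm_num)] at this
    have hfac : |1 - x ^ 2| ≤ |1 - x| * (1 + x) := by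
      have h7 : 1 - x ^ 2 = (1 - x) * (1 + x) := by ring
      rw [h7, abs_mul, abs_of_pos (by linarith : (0:ℝ) < 1 + x)]
    have hb1 : |1 - x ^ 2| ≤ 4 * ε * (201/99) :=
      hfac.trans (mul_le_mul hy3 (by linarith) (by linarith) (by positivity))
    have h8 : ε ≤ (1/10) * Real.sqrt ε := by nlinarith [hsq, hsqle, hsqpos]
    have h9 : Real.sqrt ε * (97/100) ^ 2 ≤ Real.sqrt ε * x ^ 2 :=
      mul_le_mul_of_nonneg_left (by nlinarith [hy1] : ((97:ℝ)/100) ^ 2 ≤ x ^ 2) hsqpos.le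
    have h10 : 4 * ε * (201/99) < Real.sqrt ε * (97/100) ^ 2 := by nlinarith [hsqpos]
    calc |1 - x ^ 2| ≤ 4 * ε * (201/99) := hb1
      _ < Real.sqrt ε * (97/100) ^ 2 := h10
      _ ≤ Real.sqrt ε * x ^ 2 := h9
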